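/- arXiv:1405.1852 — 3 statements merged into one kernel-verified Lean document; each statement's English description precedes it below -/
import Mathlib

section
/- Let U = ∑_k λ_k P_k be a unitary operator on a Hilbert space with pure point spectrum, where the P_k are mutually orthogonal projections summing to the identity and |λ_k| = 1 with distinct λ_k. Then for any bounded operator A, the Cesàro averages (1/N) ∑_{i=0}^{N−1} U^i A (U^i)† converge strongly to ∑_k P_k A P_k. -/
open scoped InnerProductSpace
open Filter Finset

private lemma cesaro_scalar {μ : ℂ} (hmod : ‖μ‖ = 1) :
    Filter.Tendsto (fun N : ℕ => (N : ℂ)⁻¹ * ∑ i ∈ Finset.range N, μ ^ i)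
      Filter.atTop (nhds (if μ = 1 then 1 else 0)) := by
  by_cases h : μ = 1
  · rw [if_pos h]
    have hev : ∀ᶠ N : ℕ in atTop,
        (1 : ℂ) = (N : ℂ)⁻¹ * ∑ i ∈ Finset.range N, μ ^ i := by
      filter_upwards [eventually_ge_atTop 1] with N hN
      have hN0 : (N : ℂ) ≠ 0 := by exact_mod_cast Nat.one_le_iff_ne_zero.mp hN
      simp [h, Finset.sum_const, Finset.card_range, inv_mul_cancel₀ hN0]
    exact tendsto_const_nhds.congr' hev
  · rw [if_neg h]
    have hb : ∀ N : ℕ, ‖(N : ℂ)⁻¹ * ∑ i ∈ Finset.range N, μ ^ i‖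
        ≤ (2 / ‖μ - 1‖) * (N : ℝ)⁻¹ := by
      intro N
      rw [geom_sum_eq h, norm_mul, norm_div]
      have h1 : ‖(N : ℂ)⁻¹‖ = (N : ℝ)⁻¹ := by simp
      have h2 : ‖μ ^ N - 1‖ ≤ 2 := by
        calc ‖μ ^ N - 1‖ ≤ ‖μ ^ N‖ + ‖(1:ℂ)‖ := norm_sub_le _ _
        _ = 2 := by rw [norm_pow, hmod]; norm_num
      have hne : ‖μ - 1‖ > 0 := norm_pos_iff.mpr (sub_ne_zero.mpr h)
      rw [h1, mul_comm]
      gcongr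
    refine squeeze_zero_norm hb ?_
    have := (tendsto_inv_atTop_zero (𝕜 := ℝ)).comp tendsto_natCast_atTop_atTop
    simpa using this.const_mul (2 / ‖μ - 1‖)

set_option maxHeartbeats 2000000 in
/-- For a unitary `U = ∑ₖ λₖ Pₖ` with pure point spectrum, the Cesàro averages
`(1/N) ∑ᵢ Uⁱ A (Uⁱ)†` converge strongly to `∑ₖ Pₖ A Pₖ`. -/
theorem cesaro_tendsto_diagonal_part
    {H : Type*} [NormedAddCommGroup H] [InnerProductSpace ℂ H] [CompleteSpace H]
    {ι : Type*} [Countable ι]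
    (P : ι → H →L[ℂ] H)
    (hP_selfadj : ∀ k, IsSelfAdjoint (P k))
    (hP_idem : ∀ k, P k * P k = P k)
    (hP_orth : ∀ k j, k ≠ j → P k * P j = 0)
    (hP_sum : ∀ x : H, HasSum (fun k => P k x) x)
    (lam : ι → ℂ)
    (hlam_mod : ∀ k, ‖lam k‖ = 1)
    (hlam_inj : Function.Injective lam)
    (U : H →L[ℂ] H)
    (hU : ∀ x : H, HasSum (fun k => lam k • P k x) (U x))
    (A : H →L[ℂ] H)
    (S : H →L[ℂ] H)
    (hS : ∀ x : H, HasSum (fun k => P k (A (P k x))) (S x)) :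
    ∀ x : H, Filter.Tendsto
      (fun N : ℕ => (N : ℂ)⁻¹ • ∑ i ∈ Finset.range N, (U ^ i * A * star (U ^ i)) x)
      Filter.atTop (nhds (S x)) := by
  classical
  -- ## basic facts about the projections
  have hPP : ∀ k (z : H), P k (P k z) = P k z := fun k z => by
    have := congrArg (fun (T : H →L[ℂ] H) => T z) (hP_idem k); simpa using this
  have hPO : ∀ {k j : ι} (z : H), k ≠ j → P k (P j z) = 0 := fun {k j} z h => by
    have := congrArg (fun (T : H →L[ℂ] H) => T z) (hP_orth k j h); simpa using this
  have hPinner : ∀ k (a b : H), ⟪P k a, b⟫_ℂ = ⟪a, P k b⟫_ℂ := fun k a b => by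
    have hadj : ContinuousLinearMap.adjoint (P k) = P k :=
      ContinuousLinearMap.isSelfAdjoint_iff'.mp (hP_selfadj k)
    calc ⟪P k a, b⟫_ℂ = ⟪ContinuousLinearMap.adjoint (P k) a, b⟫_ℂ := by rw [hadj]
      _ = ⟪a, P k b⟫_ℂ := ContinuousLinearMap.adjoint_inner_left _ _ _
  -- ## unimodularity consequences
  have hll : ∀ k, lam k * (starRingEnd ℂ) (lam k) = 1 := fun k => by
    rw [Complex.mul_conj]
    norm_cast
    rw [Complex.normSq_eq_norm_sq, hlam_mod]; norm_num
  have hll' : ∀ k, (starRingEnd ℂ) (lam k) * lam k = 1 := fun k => by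
    rw [mul_comm]; exact hll k
  -- ## spectral relations
  have hPU : ∀ (j : ι) (z : H), P j (U z) = lam j • P j z := by
    intro j z
    have h1 : HasSum (fun k => P j (lam k • P k z)) (P j (U z)) := (hU z).mapL (P j)
    have h2 : HasSum (fun k => P j (lam k • P k z)) (P j (lam j • P j z)) :=
      hasSum_single j (fun k hk => by simp [map_smul, hPO z (Ne.symm hk)])
    have h3 := h1.unique h2
    rw [h3, map_smul, hPP]
  have hUP : ∀ (j : ι) (z : H), U (P j z) = lam j • P j z := by
    intro j z
    have h2 : HasSum (fun k => lam k • P k (P j z)) (lam j • P j z) := by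
      simpa [hPP] using
        hasSum_single (f := fun k => lam k • P k (P j z)) j
          (fun k hk => by simp [hPO z hk])
    exact (hU (P j z)).unique h2
  have hPUstar : ∀ (j : ι) (z : H), P j (star U z) = (starRingEnd ℂ) (lam j) • P j z := by
    intro j z
    apply ext_inner_right ℂ
    intro v
    rw [hPinner, ContinuousLinearMap.star_eq_adjoint, ContinuousLinearMap.adjoint_inner_left,
      hUP, inner_smul_right, inner_smul_left, ← hPinner]
    simp
  have hstarU_exp : ∀ z : H, HasSum (fun k => (starRingEnd ℂ) (lam k) • P k z) (star U z) := by
    intro z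
    have h := hP_sum (star U z)
    simp only [hPUstar] at h
    exact h
  have hstarUP : ∀ (j : ι) (z : H), star U (P j z) = (starRingEnd ℂ) (lam j) • P j z := by
    intro j z
    have h2 : HasSum (fun k => (starRingEnd ℂ) (lam k) • P k (P j z))
        ((starRingEnd ℂ) (lam j) • P j z) := by
      simpa [hPP] using
        hasSum_single (f := fun k => (starRingEnd ℂ) (lam k) • P k (P j z)) j
          (fun k hk => by simp [hPO z hk])
    exact (hstarU_exp (P j z)).unique h2
  -- ## unitarity
  have hUUstar : ∀ z : H, U (star U z) = z := by
    intro z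
    have h1 := hU (star U z)
    simp only [hPUstar, smul_smul, hll, one_smul] at h1
    exact h1.unique (hP_sum z)
  have hUstarU : ∀ z : H, star U (U z) = z := by
    intro z
    have h1 := hstarU_exp (U z)
    simp only [hPU, smul_smul, hll', one_smul] at h1
    exact h1.unique (hP_sum z)
  -- ## norm preservation
  have hnormU : ∀ z : H, ‖U z‖ = ‖z‖ := by
    intro z
    have h1 : ⟪U z, U z⟫_ℂ = ⟪z, z⟫_ℂ := by
      calc ⟪U z, U z⟫_ℂ = ⟪ContinuousLinearMap.adjoint U (U z), z⟫_ℂ :=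
            (ContinuousLinearMap.adjoint_inner_left U z (U z)).symm
        _ = ⟪z, z⟫_ℂ := by rw [← ContinuousLinearMap.star_eq_adjoint, hUstarU]
    have h3 : ‖U z‖ ^ 2 = ‖z‖ ^ 2 := by
      rw [← @inner_self_eq_norm_sq ℂ, ← @inner_self_eq_norm_sq ℂ, h1]
    rw [← Real.sqrt_sq (norm_nonneg (U z)), ← Real.sqrt_sq (norm_nonneg z), h3]
  have hnormUstar : ∀ z : H, ‖star U z‖ = ‖z‖ := by
    intro z
    have h1 : ⟪star U z, star U z⟫_ℂ = ⟪z, z⟫_ℂ := by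
      calc ⟪star U z, star U z⟫_ℂ
          = ⟪ContinuousLinearMap.adjoint U z, star U z⟫_ℂ := by
            rw [ContinuousLinearMap.star_eq_adjoint]
        _ = ⟪z, U (star U z)⟫_ℂ := ContinuousLinearMap.adjoint_inner_left _ _ _
        _ = ⟪z, z⟫_ℂ := by rw [hUUstar]
    have h3 : ‖star U z‖ ^ 2 = ‖z‖ ^ 2 := by
      rw [← @inner_self_eq_norm_sq ℂ, ← @inner_self_eq_norm_sq ℂ, h1]
    rw [← Real.sqrt_sq (norm_nonneg (star U z)), ← Real.sqrt_sq (norm_nonneg z), h3]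
  have hnormUpow : ∀ (i : ℕ) (z : H), ‖(U ^ i) z‖ = ‖z‖ := by
    intro i
    induction i with
    | zero => intro z; simp
    | succ n ih =>
      intro z
      rw [pow_succ, ContinuousLinearMap.mul_apply, ih, hnormU]
  have hnormUstarpow : ∀ (i : ℕ) (z : H), ‖((star U) ^ i) z‖ = ‖z‖ := by
    intro i
    induction i with
    | zero => intro z; simp
    | succ n ih =>
      intro z
      rw [pow_succ, ContinuousLinearMap.mul_apply, ih, hnormUstar]
  -- ## eigenvector relations for powers
  have hUpowP : ∀ (i : ℕ) (j : ι) (z : H), (U ^ i) (P j z) = (lam j) ^ i • P j z := by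
    intro i j z
    induction i with
    | zero => simp
    | succ n ih =>
      rw [pow_succ, ContinuousLinearMap.mul_apply, hUP, map_smul, ih, smul_smul, ← pow_succ']
  have hstarUpowP : ∀ (i : ℕ) (j : ι) (z : H),
      ((star U) ^ i) (P j z) = ((starRingEnd ℂ) (lam j)) ^ i • P j z := by
    intro i j z
    induction i with
    | zero => simp
    | succ n ih =>
      rw [pow_succ, ContinuousLinearMap.mul_apply, hstarUP, map_smul, ih, smul_smul, ← pow_succ']
  -- ## main argument
  intro x
  set T : ℕ → (H →L[ℂ] H) :=
    fun N => (N : ℂ)⁻¹ • ∑ i ∈ Finset.range N, (U ^ i * A * star (U ^ i)) with hT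
  have hTapp : ∀ N : ℕ,
      (N : ℂ)⁻¹ • ∑ i ∈ Finset.range N, (U ^ i * A * star (U ^ i)) x = T N x := by
    intro N
    simp [hT, ContinuousLinearMap.sum_apply]
  have hkey : Filter.Tendsto (fun N : ℕ => T N x) Filter.atTop (nhds (S x)) := by
    rw [Metric.tendsto_atTop]
    intro ε hε
    set w : ι → H := fun j => A (P j x) with hw
    set δ₁ : ℝ := ε / (4 * (‖A‖ + 1)) with hδ₁
    have hδ₁pos : 0 < δ₁ := by positivity
    have hFev1 := Metric.tendsto_nhds.mp (hP_sum x) δ₁ hδ₁pos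
    have hFev2 := Metric.tendsto_nhds.mp (hS x) (ε/4) (by positivity)
    obtain ⟨F, hF1, hF2⟩ := (hFev1.and hFev2).exists
    rw [dist_eq_norm] at hF1 hF2
    set δ₂ : ℝ := ε / (4 * (F.card + 1)) with hδ₂
    have hδ₂pos : 0 < δ₂ := by positivity
    have hGex : ∀ j : ι, ∃ Gj : Finset ι, j ∈ Gj ∧ ‖∑ m ∈ Gj, P m (w j) - w j‖ < δ₂ := by
      intro j
      have h1 := Metric.tendsto_nhds.mp (hP_sum (w j)) δ₂ hδ₂pos
      have h2 : ∀ᶠ Gj : Finset ι in atTop, {j} ≤ Gj := eventually_ge_atTop {j}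
      obtain ⟨Gj, hG1, hG2⟩ := (h1.and h2).exists
      exact ⟨Gj, by simpa using hG2, by rw [← dist_eq_norm]; exact hG1⟩
    choose G hGmem hGnorm using hGex
    -- uniform bound on T N
    have hterm : ∀ (i : ℕ) (z : H), ‖(U ^ i * A * star (U ^ i)) z‖ ≤ ‖A‖ * ‖z‖ := by
      intro i z
      have he : (U ^ i * A * star (U ^ i)) z = (U ^ i) (A ((star U ^ i) z)) := by
        simp [ContinuousLinearMap.mul_apply, star_pow]
      rw [he, hnormUpow]
      calc ‖A ((star U ^ i) z)‖ ≤ ‖A‖ * ‖(star U ^ i) z‖ := A.le_opNorm _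
        _ = ‖A‖ * ‖z‖ := by rw [hnormUstarpow]
    have hTnorm : ∀ N : ℕ, 1 ≤ N → ∀ z : H, ‖T N z‖ ≤ ‖A‖ * ‖z‖ := by
      intro N hN z
      have hNR : (0:ℝ) < N := by exact_mod_cast hN
      have he : T N z = (N : ℂ)⁻¹ • ∑ i ∈ Finset.range N, (U ^ i * A * star (U ^ i)) z := by
        simp [hT, ContinuousLinearMap.sum_apply]
      rw [he, norm_smul]
      have h1 : ‖(N:ℂ)⁻¹‖ = (N:ℝ)⁻¹ := by simp
      have h2 : ‖∑ i ∈ Finset.range N, (U ^ i * A * star (U ^ i)) z‖ ≤ N * (‖A‖ * ‖z‖) := by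
        calc ‖∑ i ∈ Finset.range N, (U ^ i * A * star (U ^ i)) z‖
            ≤ ∑ i ∈ Finset.range N, ‖(U ^ i * A * star (U ^ i)) z‖ := norm_sum_le _ _
          _ ≤ ∑ i ∈ Finset.range N, ‖A‖ * ‖z‖ := Finset.sum_le_sum (fun i _ => hterm i z)
          _ = N * (‖A‖ * ‖z‖) := by simp [Finset.sum_const, Finset.card_range, nsmul_eq_mul]
      rw [h1]
      calc (N:ℝ)⁻¹ * ‖∑ i ∈ Finset.range N, (U ^ i * A * star (U ^ i)) z‖
          ≤ (N:ℝ)⁻¹ * ((N:ℝ) * (‖A‖ * ‖z‖)) := by gcongr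
        _ = ‖A‖ * ‖z‖ := by field_simp
    -- action on eigenvectors
    have hTP : ∀ (N : ℕ) (j : ι), T N (P j x)
        = (N : ℂ)⁻¹ • ∑ i ∈ Finset.range N, ((starRingEnd ℂ) (lam j)) ^ i • (U ^ i) (w j) := by
      intro N j
      have he : T N (P j x)
          = (N : ℂ)⁻¹ • ∑ i ∈ Finset.range N, (U ^ i * A * star (U ^ i)) (P j x) := by
        simp [hT, ContinuousLinearMap.sum_apply]
      rw [he]
      congr 1
      refine Finset.sum_congr rfl fun i _ => ?_
      have he2 : (U ^ i * A * star (U ^ i)) (P j x) = (U ^ i) (A ((star U ^ i) (P j x))) := by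
        simp [ContinuousLinearMap.mul_apply, star_pow]
      rw [he2, hstarUpowP, map_smul, map_smul]
    -- the finite-rank comparison operators
    set D : ℕ → ι → H := fun N j => ∑ m ∈ G j,
      ((N : ℂ)⁻¹ * ∑ i ∈ Finset.range N, ((starRingEnd ℂ) (lam j) * lam m) ^ i) • P m (w j)
      with hD
    have hD_eq : ∀ (N : ℕ) (j : ι), D N j
        = (N : ℂ)⁻¹ • ∑ i ∈ Finset.range N, ((starRingEnd ℂ) (lam j)) ^ i •
            (U ^ i) (∑ m ∈ G j, P m (w j)) := by
      intro N j
      simp only [hD, map_sum, hUpowP, Finset.smul_sum, smul_smul, ← mul_pow, mul_sum,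
        Finset.sum_smul]
      exact Finset.sum_comm
    have hTD : ∀ N : ℕ, 1 ≤ N → ∀ j : ι, ‖T N (P j x) - D N j‖ < δ₂ := by
      intro N hN j
      have hNR : (0:ℝ) < N := by exact_mod_cast hN
      rw [hTP N j, hD_eq N j, ← smul_sub, ← Finset.sum_sub_distrib, norm_smul]
      have h1 : ‖(N:ℂ)⁻¹‖ = (N:ℝ)⁻¹ := by simp
      have hterm2 : ∀ i ∈ Finset.range N,
          ‖((starRingEnd ℂ) (lam j)) ^ i • (U ^ i) (w j)
            - ((starRingEnd ℂ) (lam j)) ^ i • (U ^ i) (∑ m ∈ G j, P m (w j))‖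
          = ‖w j - ∑ m ∈ G j, P m (w j)‖ := by
        intro i _
        rw [← smul_sub, ← map_sub, norm_smul, norm_pow, RCLike.norm_conj, hlam_mod, one_pow,
          one_mul, hnormUpow]
      have h2 : ‖∑ i ∈ Finset.range N,
          (((starRingEnd ℂ) (lam j)) ^ i • (U ^ i) (w j)
            - ((starRingEnd ℂ) (lam j)) ^ i • (U ^ i) (∑ m ∈ G j, P m (w j)))‖
          ≤ (N:ℝ) * ‖w j - ∑ m ∈ G j, P m (w j)‖ := by
        refine le_trans (norm_sum_le _ _) ?_
        rw [Finset.sum_congr rfl hterm2]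
        simp [Finset.sum_const, Finset.card_range, nsmul_eq_mul]
      have h3 : ‖w j - ∑ m ∈ G j, P m (w j)‖ < δ₂ := by
        rw [norm_sub_rev]; exact hGnorm j
      rw [h1]
      refine lt_of_le_of_lt ?_ h3
      calc (N:ℝ)⁻¹ * ‖∑ i ∈ Finset.range N,
          (((starRingEnd ℂ) (lam j)) ^ i • (U ^ i) (w j)
            - ((starRingEnd ℂ) (lam j)) ^ i • (U ^ i) (∑ m ∈ G j, P m (w j)))‖
          ≤ (N:ℝ)⁻¹ * ((N:ℝ) * ‖w j - ∑ m ∈ G j, P m (w j)‖) := by gcongr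
        _ = ‖w j - ∑ m ∈ G j, P m (w j)‖ := by field_simp
    -- limits of the comparison operators
    have hmu : ∀ j m : ι, (starRingEnd ℂ) (lam j) * lam m = 1 → m = j := by
      intro j m h
      apply hlam_inj
      have h2 := congrArg (fun t => lam j * t) h
      simp only [mul_one] at h2
      rw [← mul_assoc, hll j, one_mul] at h2
      exact h2
    have hDlim : ∀ j : ι, Filter.Tendsto (fun N => D N j) Filter.atTop (nhds (P j (w j))) := by
      intro j
      have hPjw : P j (w j) = ∑ m ∈ G j,
          (if (starRingEnd ℂ) (lam j) * lam m = 1 then (1:ℂ) else 0) • P m (w j) := by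
        rw [Finset.sum_eq_single j]
        · rw [if_pos (hll' j), one_smul]
        · intro m hm hmj
          rw [if_neg (fun hc => hmj (hmu j m hc)), zero_smul]
        · intro hj; exact absurd (hGmem j) hj
      rw [hPjw]
      simp only [hD]
      apply tendsto_finset_sum
      intro m _
      have hmod1 : ‖(starRingEnd ℂ) (lam j) * lam m‖ = 1 := by
        rw [norm_mul, RCLike.norm_conj, hlam_mod, hlam_mod, one_mul]
      exact (cesaro_scalar hmod1).smul_const _
    have hDsum := tendsto_finset_sum F (fun j (_ : j ∈ F) => hDlim j)
    have hDev := Metric.tendsto_nhds.mp hDsum (ε/4) (by positivity)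
    have hfinal : ∀ᶠ N : ℕ in atTop, dist (T N x) (S x) < ε := by
      filter_upwards [hDev, eventually_ge_atTop 1] with N hDN hN1
      rw [dist_eq_norm] at hDN ⊢
      have hdecomp : T N x - S x =
          T N (x - ∑ k ∈ F, P k x)
          + (∑ j ∈ F, (T N (P j x) - D N j))
          + (∑ j ∈ F, D N j - ∑ j ∈ F, P j (w j))
          + (∑ j ∈ F, P j (w j) - S x) := by
        have h1 : T N x = T N (x - ∑ k ∈ F, P k x) + ∑ j ∈ F, T N (P j x) := by
          rw [map_sub, map_sum]; abel
        rw [h1, Finset.sum_sub_distrib]; abel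
      rw [hdecomp]
      have e1 : ‖T N (x - ∑ k ∈ F, P k x)‖ < ε/4 := by
        have b0 : ‖x - ∑ k ∈ F, P k x‖ < δ₁ := by rw [norm_sub_rev]; exact hF1
        have b1 := hTnorm N hN1 (x - ∑ k ∈ F, P k x)
        have hA0 : (0:ℝ) ≤ ‖A‖ := norm_nonneg A
        have b2 : ‖A‖ * ‖x - ∑ k ∈ F, P k x‖ < (‖A‖ + 1) * δ₁ := by
          nlinarith [norm_nonneg (x - ∑ k ∈ F, P k x)]
        have b3 : (‖A‖ + 1) * δ₁ = ε/4 := by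
          rw [hδ₁]; field_simp
        linarith
      have e2 : ‖∑ j ∈ F, (T N (P j x) - D N j)‖ < ε/4 := by
        have b1 : ‖∑ j ∈ F, (T N (P j x) - D N j)‖ ≤ ∑ j ∈ F, ‖T N (P j x) - D N j‖ :=
          norm_sum_le _ _
        have b2 : ∑ j ∈ F, ‖T N (P j x) - D N j‖ ≤ ∑ j ∈ F, δ₂ :=
          Finset.sum_le_sum (fun j _ => (hTD N hN1 j).le)
        have b3 : ∑ j ∈ F, (δ₂:ℝ) = F.card * δ₂ := by
          simp [Finset.sum_const, nsmul_eq_mul]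
        have b4 : (F.card:ℝ) * δ₂ < ((F.card:ℝ) + 1) * δ₂ := by nlinarith [hδ₂pos]
        have b5 : ((F.card:ℝ) + 1) * δ₂ = ε/4 := by
          rw [hδ₂]; field_simp
        linarith
      have e3 : ‖∑ j ∈ F, D N j - ∑ j ∈ F, P j (w j)‖ < ε/4 := hDN
      have e4 : ‖∑ j ∈ F, P j (w j) - S x‖ < ε/4 := by
        simp only [hw]
        exact hF2
      calc ‖T N (x - ∑ k ∈ F, P k x)
          + (∑ j ∈ F, (T N (P j x) - D N j))
          + (∑ j ∈ F, D N j - ∑ j ∈ F, P j (w j))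
          + (∑ j ∈ F, P j (w j) - S x)‖
          ≤ ‖T N (x - ∑ k ∈ F, P k x)
              + (∑ j ∈ F, (T N (P j x) - D N j))
              + (∑ j ∈ F, D N j - ∑ j ∈ F, P j (w j))‖
            + ‖∑ j ∈ F, P j (w j) - S x‖ := norm_add_le _ _
        _ ≤ (‖T N (x - ∑ k ∈ F, P k x)
              + (∑ j ∈ F, (T N (P j x) - D N j))‖
            + ‖∑ j ∈ F, D N j - ∑ j ∈ F, P j (w j)‖)
            + ‖∑ j ∈ F, P j (w j) - S x‖ := by gcongr; exact norm_add_le _ _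
        _ ≤ ((‖T N (x - ∑ k ∈ F, P k x)‖
            + ‖∑ j ∈ F, (T N (P j x) - D N j)‖)
            + ‖∑ j ∈ F, D N j - ∑ j ∈ F, P j (w j)‖)
            + ‖∑ j ∈ F, P j (w j) - S x‖ := by gcongr; exact norm_add_le _ _
        _ < ε := by linarith
    exact (eventually_atTop.mp hfinal)
  exact hkey.congr (fun N => (hTapp N).symm)
end

section
/- Let H be a Hilbert space, H₀ a bounded self-adjoint operator, (u_n) unitary operators on H, and for N ≥ 1, t ∈ ℝ define the unitary U_N(t) = ∏_{n=0}^{N−1} u_{N−n} e^{−iH₀ t/N}. Then for any bounded operator ρ, with ρ_N(t) = U_N(t) ρ U_N(t)†, one has ‖ρ_N(t) − ρ_{N+1}(t)‖ ≤ 2‖ρ‖ (e^{2‖H₀‖|t|/N} − 1) + ‖ρ_N(t) − u_{N+1} ρ_N(t) u_{N+1}†‖, where ‖·‖ is the operator norm. -/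
open scoped ComplexOrder
open scoped Nat

section Aux

variable {H : Type*} [NormedAddCommGroup H] [InnerProductSpace ℂ H] [CompleteSpace H]

lemma aux_norm_exp_sub_one (X : H →L[ℂ] H) :
    ‖NormedSpace.exp X - 1‖ ≤ Real.exp ‖X‖ - 1 := by
  have hs : Summable (fun n : ℕ => ((n ! : ℂ))⁻¹ • X ^ n) := NormedSpace.expSeries_summable' X
  have hx : NormedSpace.exp X = ∑' n : ℕ, ((n ! : ℂ))⁻¹ • X ^ n := by
    rw [NormedSpace.exp_eq_tsum ℂ]
  rw [hx, hs.tsum_eq_zero_add]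
  simp only [Nat.factorial_zero, pow_zero, Nat.cast_one, inv_one, one_smul, add_sub_cancel_left]
  have hreal : Summable (fun n : ℕ => ‖X‖ ^ (n + 1) / (n + 1)!) := by
    exact (summable_nat_add_iff (f := fun n : ℕ => ‖X‖ ^ n / n !) 1).mpr (Real.summable_pow_div_factorial ‖X‖)
  have hterm : ∀ n : ℕ, ‖(((n + 1)! : ℂ))⁻¹ • X ^ (n + 1)‖ ≤ ‖X‖ ^ (n + 1) / (n + 1)! := by
    intro n
    rw [norm_smul]
    have h1 : ‖(((n + 1)! : ℂ))⁻¹‖ = (((n + 1)! : ℝ))⁻¹ := by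
      rw [norm_inv]; norm_cast
    rw [h1, div_eq_inv_mul]
    exact mul_le_mul_of_nonneg_left (norm_pow_le' X (Nat.succ_pos n)) (by positivity)
  have hnorms : Summable (fun n : ℕ => ‖(((n + 1)! : ℂ))⁻¹ • X ^ (n + 1)‖) := by
    exact (summable_nat_add_iff (f := fun n : ℕ => ‖((n ! : ℂ))⁻¹ • X ^ n‖) 1).mpr (NormedSpace.norm_expSeries_summable' X)
  have hbd : ‖∑' n : ℕ, (((n + 1)! : ℂ))⁻¹ • X ^ (n + 1)‖ ≤ ∑' n : ℕ, ‖X‖ ^ (n + 1) / (n + 1)! :=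
    le_trans (norm_tsum_le_tsum_norm hnorms) (Summable.tsum_le_tsum hterm hnorms hreal)
  have hexp : Real.exp ‖X‖ = ‖X‖ ^ 0 / (0! : ℝ) + ∑' n : ℕ, ‖X‖ ^ (n + 1) / (n + 1)! := by
    rw [Real.exp_eq_exp_ℝ, NormedSpace.exp_eq_tsum_div]
    exact Summable.tsum_eq_zero_add (Real.summable_pow_div_factorial ‖X‖)
  simp only [pow_zero, Nat.factorial_zero, Nat.cast_one, div_one] at hexp
  linarith

lemma aux_unitary_norm_le {a : H →L[ℂ] H} (ha : a ∈ unitary (H →L[ℂ] H)) : ‖a‖ ≤ 1 := by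
  have h1 : ‖star a * a‖ = ‖a‖ * ‖a‖ := CStarRing.norm_star_mul_self
  rw [(Unitary.mem_iff.mp ha).1] at h1
  have h2 : ‖(1 : H →L[ℂ] H)‖ ≤ 1 := ContinuousLinearMap.norm_id_le
  nlinarith [norm_nonneg a]

lemma aux_prod_norm_le (l : List (H →L[ℂ] H)) (h : ∀ x ∈ l, ‖x‖ ≤ 1) : ‖l.prod‖ ≤ 1 := by
  induction l with
  | nil =>
    have h1 : ‖(1 : H →L[ℂ] H)‖ ≤ 1 := ContinuousLinearMap.norm_id_le
    simpa using h1
  | cons a l ih =>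
    rw [List.prod_cons]
    have ha := h a (List.mem_cons_self (a := a) (l := l))
    have hl := ih (fun x hx => h x (List.mem_cons_of_mem a hx))
    calc ‖a * l.prod‖ ≤ ‖a‖ * ‖l.prod‖ := norm_mul_le _ _
      _ ≤ 1 := by nlinarith [norm_nonneg a, norm_nonneg l.prod]

lemma aux_telescope (l : List ((H →L[ℂ] H) × (H →L[ℂ] H)))
    (h1 : ∀ p ∈ l, ‖p.1‖ ≤ 1) (h2 : ∀ p ∈ l, ‖p.2‖ ≤ 1) :
    ‖(l.map Prod.fst).prod - (l.map Prod.snd).prod‖ ≤ (l.map fun p => ‖p.1 - p.2‖).sum := by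
  induction l with
  | nil => simp
  | cons p l ih =>
    simp only [List.map_cons, List.prod_cons, List.sum_cons]
    have key : p.1 * (l.map Prod.fst).prod - p.2 * (l.map Prod.snd).prod
        = (p.1 - p.2) * (l.map Prod.fst).prod
          + p.2 * ((l.map Prod.fst).prod - (l.map Prod.snd).prod) := by
      noncomm_ring
    rw [key]
    have hp1 : ‖(l.map Prod.fst).prod‖ ≤ 1 := by
      apply aux_prod_norm_le
      intro x hx
      obtain ⟨q, hq, rfl⟩ := List.mem_map.mp hx
      exact h1 q (List.mem_cons_of_mem p hq)
    have hp2 : ‖p.2‖ ≤ 1 := h2 p (List.mem_cons_self (a := p) (l := l))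
    have hih := ih (fun q hq => h1 q (List.mem_cons_of_mem p hq))
      (fun q hq => h2 q (List.mem_cons_of_mem p hq))
    have t1 : ‖(p.1 - p.2) * (l.map Prod.fst).prod‖ ≤ ‖p.1 - p.2‖ * ‖(l.map Prod.fst).prod‖ :=
      norm_mul_le _ _
    have t2 : ‖p.2 * ((l.map Prod.fst).prod - (l.map Prod.snd).prod)‖
        ≤ ‖p.2‖ * ‖(l.map Prod.fst).prod - (l.map Prod.snd).prod‖ := norm_mul_le _ _
    have t0 := norm_add_le ((p.1 - p.2) * (l.map Prod.fst).prod)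
      (p.2 * ((l.map Prod.fst).prod - (l.map Prod.snd).prod))
    nlinarith [norm_nonneg (p.1 - p.2), norm_nonneg p.2,
      norm_nonneg ((l.map Prod.fst).prod - (l.map Prod.snd).prod)]

lemma aux_conj_diff {a b : H →L[ℂ] H} (ha : a ∈ unitary (H →L[ℂ] H))
    (hb : b ∈ unitary (H →L[ℂ] H)) (ρ : H →L[ℂ] H) :
    ‖a * ρ * star a - b * ρ * star b‖ ≤ 2 * ‖ρ‖ * ‖a - b‖ := by
  have key : a * ρ * star a - b * ρ * star b
      = (a - b) * (ρ * star a) + b * (ρ * (star a - star b)) := by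
    noncomm_ring
  rw [key]
  have h1 : ‖(a - b) * (ρ * star a)‖ ≤ ‖a - b‖ * ‖ρ * star a‖ := norm_mul_le _ _
  have h2 : ‖ρ * star a‖ = ‖ρ‖ := CStarRing.norm_mul_mem_unitary ρ (Unitary.star_mem ha)
  have h3 : ‖b * (ρ * (star a - star b))‖ = ‖ρ * (star a - star b)‖ :=
    CStarRing.norm_mem_unitary_mul _ hb
  have h4 : ‖ρ * (star a - star b)‖ ≤ ‖ρ‖ * ‖star a - star b‖ := norm_mul_le _ _
  have h5 : ‖star a - star b‖ = ‖a - b‖ := by rw [← star_sub, norm_star]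
  have h0 := norm_add_le ((a - b) * (ρ * star a)) (b * (ρ * (star a - star b)))
  rw [h5] at h4
  rw [h2] at h1
  nlinarith [norm_nonneg (a - b), norm_nonneg ρ]

lemma aux_exp_unitary {H₀ : H →L[ℂ] H} (hH₀ : IsSelfAdjoint H₀) (c : ℝ) :
    NormedSpace.exp ((-(Complex.I) * (c : ℂ)) • H₀) ∈ unitary (H →L[ℂ] H) := by
  have hmem : (-(Complex.I) * (c : ℂ)) ∈ skewAdjoint ℂ := by
    rw [skewAdjoint.mem_iff]
    simp [Complex.ext_iff]
  let +nondep : NormedAlgebra ℚ (H →L[ℂ] H) := .restrictScalars ℚ ℂ _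
  exact NormedSpace.exp_mem_unitary_of_mem_skewAdjoint (hH₀.smul_mem_skewAdjoint hmem)

end Aux

lemma aux_numeric (a : ℝ) (ha : 0 ≤ a) (N : ℕ) (hN : 1 ≤ N) :
    (Real.exp (a / ((N : ℝ) + 1)) - 1)
      + (N : ℝ) * (Real.exp (a / ((N : ℝ) * ((N : ℝ) + 1))) - 1)
    ≤ Real.exp (2 * a / (N : ℝ)) - 1 := by
  have hNpos : (0 : ℝ) < (N : ℝ) := by exact_mod_cast hN
  set x : ℝ := a / ((N : ℝ) * ((N : ℝ) + 1)) with hxdef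
  have hx : 0 ≤ x := by positivity
  have h1 : (N : ℝ) * x = a / ((N : ℝ) + 1) := by
    rw [hxdef]; field_simp
  have h2 : Real.exp ((N : ℝ) * x) = Real.exp x ^ N := Real.exp_nat_mul x N
  have h3 : 1 + (N : ℝ) * (Real.exp x - 1) ≤ (1 + (Real.exp x - 1)) ^ N :=
    one_add_mul_le_pow (by nlinarith [Real.exp_pos x]) N
  have h3' : 1 + (N : ℝ) * (Real.exp x - 1) ≤ Real.exp ((N : ℝ) * x) := by
    rw [h2]; simpa using h3
  have h4 : Real.exp (2 * ((N : ℝ) * x)) = Real.exp ((N : ℝ) * x) ^ 2 := by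
    rw [two_mul, Real.exp_add, sq]
  have h5 : Real.exp (2 * ((N : ℝ) * x)) ≤ Real.exp (2 * a / (N : ℝ)) := by
    apply Real.exp_le_exp.mpr
    rw [h1]
    have hd : a / ((N : ℝ) + 1) ≤ a / (N : ℝ) := by
      gcongr
      · linarith
    rw [mul_div_assoc]
    linarith
  rw [← h1]
  nlinarith [sq_nonneg (Real.exp ((N : ℝ) * x) - 1), Real.exp_pos ((N : ℝ) * x)]
noncomputable def pulseEvolution
    {H : Type*} [NormedAddCommGroup H] [InnerProductSpace ℂ H] [CompleteSpace H]
    (u : ℕ → H →L[ℂ] H) (H₀ : H →L[ℂ] H) (N : ℕ) (t : ℝ) : H →L[ℂ] H :=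
  ((List.range N).map (fun n =>
    u (N - n) * NormedSpace.exp ((-(Complex.I) * ((t / N : ℝ) : ℂ)) • H₀))).prod

/-- One-step comparison inequality for imperfect decoupling sequences
(Theorem 3 of Appendix B). -/
theorem decoupling_step_inequality
    {H : Type*} [NormedAddCommGroup H] [InnerProductSpace ℂ H] [CompleteSpace H]
    (u : ℕ → H →L[ℂ] H) (hu : ∀ n, u n ∈ unitary (H →L[ℂ] H))
    (H₀ : H →L[ℂ] H) (hH₀ : IsSelfAdjoint H₀)
    (ρ : H →L[ℂ] H) (t : ℝ) (N : ℕ) (hN : 1 ≤ N) :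
    ‖pulseEvolution u H₀ N t * ρ * star (pulseEvolution u H₀ N t)
      - pulseEvolution u H₀ (N + 1) t * ρ * star (pulseEvolution u H₀ (N + 1) t)‖
    ≤ 2 * ‖ρ‖ * (Real.exp (2 * ‖H₀‖ * |t| / N) - 1)
      + ‖pulseEvolution u H₀ N t * ρ * star (pulseEvolution u H₀ N t)
          - u (N + 1) * (pulseEvolution u H₀ N t * ρ * star (pulseEvolution u H₀ N t))
            * star (u (N + 1))‖ := by
  have hNpos : (0 : ℝ) < (N : ℝ) := by exact_mod_cast hN
  set c₁ : ℝ := t / (N : ℝ) with hc₁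
  set c₂ : ℝ := t / ((N : ℝ) + 1) with hc₂
  set c₃ : ℝ := t / ((N : ℝ) * ((N : ℝ) + 1)) with hc₃
  set F := NormedSpace.exp ((-(Complex.I) * (c₁ : ℂ)) • H₀) with hF
  set E := NormedSpace.exp ((-(Complex.I) * (c₂ : ℂ)) • H₀) with hE
  set G := NormedSpace.exp ((-(Complex.I) * (c₃ : ℂ)) • H₀) with hG
  set U := pulseEvolution u H₀ N t with hUdef
  set V := pulseEvolution u H₀ (N + 1) t with hVdef
  set w := u (N + 1) with hwdef
  have hEu : E ∈ unitary (H →L[ℂ] H) := aux_exp_unitary hH₀ c₂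
  have hFu : F ∈ unitary (H →L[ℂ] H) := aux_exp_unitary hH₀ c₁
  have hGu : G ∈ unitary (H →L[ℂ] H) := aux_exp_unitary hH₀ c₃
  -- unfold U and V as explicit products
  have hU : U = ((List.range N).map (fun n => u (N - n) * F)).prod := rfl
  have hV : V = (w * E) * ((List.range N).map (fun n => u (N - n) * E)).prod := by
    rw [hVdef]
    unfold pulseEvolution
    have hcast : ((t / ((N : ℕ) + 1 : ℕ) : ℝ) : ℂ) = ((c₂ : ℝ) : ℂ) := by
      rw [hc₂]; push_cast; ring_nf
    rw [List.range_succ_eq_map, List.map_cons, List.prod_cons, List.map_map]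
    congr 1
    · rw [hcast]; rfl
    · congr 1
      apply List.map_congr_left
      intro n _
      simp only [Function.comp_apply, Nat.succ_sub_succ_eq_sub, hcast]
      rfl
  -- unitarity of U, V, wU
  have hUu : U ∈ unitary (H →L[ℂ] H) := by
    rw [hU]
    apply list_prod_mem
    intro x hx
    obtain ⟨n, _, rfl⟩ := List.mem_map.mp hx
    exact mul_mem (hu _) hFu
  have hVu : V ∈ unitary (H →L[ℂ] H) := by
    rw [hV]
    refine mul_mem (mul_mem (hu _) hEu) ?_
    apply list_prod_mem
    intro x hx
    obtain ⟨n, _, rfl⟩ := List.mem_map.mp hx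
    exact mul_mem (hu _) hEu
  have hwUu : w * U ∈ unitary (H →L[ℂ] H) := mul_mem (hu _) hUu
  -- telescoping bound on ‖w * U - V‖
  set L : List ((H →L[ℂ] H) × (H →L[ℂ] H)) :=
    (w * 1, w * E) :: (List.range N).map (fun n => (u (N - n) * F, u (N - n) * E)) with hL
  have hfst : (L.map Prod.fst).prod = w * U := by
    rw [hL, hU]
    simp [List.map_map, Function.comp_def]
  have hsnd : (L.map Prod.snd).prod = V := by
    rw [hL, hV]
    simp [List.map_map, Function.comp_def]
  have hmem1 : ∀ p ∈ L, ‖p.1‖ ≤ 1 := by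
    intro p hp
    rw [hL] at hp
    rcases List.mem_cons.mp hp with h | h
    · subst h; simpa using aux_unitary_norm_le (hu (N + 1))
    · obtain ⟨n, _, rfl⟩ := List.mem_map.mp h
      exact aux_unitary_norm_le (mul_mem (hu _) hFu)
  have hmem2 : ∀ p ∈ L, ‖p.2‖ ≤ 1 := by
    intro p hp
    rw [hL] at hp
    rcases List.mem_cons.mp hp with h | h
    · subst h; exact aux_unitary_norm_le (mul_mem (hu _) hEu)
    · obtain ⟨n, _, rfl⟩ := List.mem_map.mp h
      exact aux_unitary_norm_le (mul_mem (hu _) hEu)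
  have htel : ‖w * U - V‖ ≤ (L.map fun p => ‖p.1 - p.2‖).sum := by
    rw [← hfst, ← hsnd]
    exact aux_telescope L hmem1 hmem2
  -- compute the sum
  have hsmul_norm : ∀ c : ℝ, ‖((-(Complex.I) * (c : ℂ)) • H₀)‖ = |c| * ‖H₀‖ := by
    intro c
    rw [norm_smul]
    congr 1
    simp [map_mul, Real.norm_eq_abs]
  have hhead : ‖w * 1 - w * E‖ ≤ Real.exp (|c₂| * ‖H₀‖) - 1 := by
    rw [← mul_sub, CStarRing.norm_mem_unitary_mul _ (hu (N + 1)), norm_sub_rev, ← hsmul_norm c₂]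
    exact aux_norm_exp_sub_one _
  have hFEeq : F = E * G := by
    have hc : Commute ((-(Complex.I) * (c₂ : ℂ)) • H₀) ((-(Complex.I) * (c₃ : ℂ)) • H₀) :=
      ((Commute.refl H₀).smul_left _).smul_right _
    let +nondep : NormedAlgebra ℚ (H →L[ℂ] H) := .restrictScalars ℚ ℂ _
    rw [hF, ← NormedSpace.exp_add_of_commute hc, ← add_smul]
    congr 2
    have hc23 : c₂ + c₃ = c₁ := by
      rw [hc₁, hc₂, hc₃]
      field_simp
    push_cast [← hc23]
    ring
  have hFE : ‖F - E‖ ≤ Real.exp (|c₃| * ‖H₀‖) - 1 := by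
    have : F - E = E * (G - 1) := by rw [hFEeq]; noncomm_ring
    rw [this, CStarRing.norm_mem_unitary_mul _ hEu, ← hsmul_norm c₃]
    exact aux_norm_exp_sub_one _
  have hsum : (L.map fun p => ‖p.1 - p.2‖).sum
      ≤ (Real.exp (|c₂| * ‖H₀‖) - 1) + (N : ℝ) * (Real.exp (|c₃| * ‖H₀‖) - 1) := by
    rw [hL, List.map_cons, List.sum_cons]
    have hx : List.map (fun p : (H →L[ℂ] H) × (H →L[ℂ] H) => ‖p.1 - p.2‖)
        (List.map (fun n => (u (N - n) * F, u (N - n) * E)) (List.range N))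
        = List.map (fun _ => ‖F - E‖) (List.range N) := by
      rw [List.map_map]
      apply List.map_congr_left
      intro n _
      show ‖u (N - n) * F - u (N - n) * E‖ = ‖F - E‖
      rw [← mul_sub]
      exact CStarRing.norm_mem_unitary_mul _ (hu _)
    rw [hx]
    have hconstsum : (List.map (fun _ => ‖F - E‖) (List.range N)).sum = (N : ℝ) * ‖F - E‖ := by
      simp [List.map_const', List.sum_replicate, nsmul_eq_mul]
    rw [hconstsum]
    have hFEnn : (N : ℝ) * ‖F - E‖ ≤ (N : ℝ) * (Real.exp (|c₃| * ‖H₀‖) - 1) := by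
      apply mul_le_mul_of_nonneg_left hFE (by positivity)
    linarith [hhead]
  -- numeric bound
  have habs2 : |c₂| * ‖H₀‖ = (‖H₀‖ * |t|) / ((N : ℝ) + 1) := by
    rw [hc₂, abs_div, abs_of_pos (by linarith : (0:ℝ) < (N : ℝ) + 1)]
    ring
  have habs3 : |c₃| * ‖H₀‖ = (‖H₀‖ * |t|) / ((N : ℝ) * ((N : ℝ) + 1)) := by
    rw [hc₃, abs_div, abs_of_pos (by nlinarith : (0:ℝ) < (N : ℝ) * ((N : ℝ) + 1))]
    ring
  have hnum : (Real.exp (|c₂| * ‖H₀‖) - 1) + (N : ℝ) * (Real.exp (|c₃| * ‖H₀‖) - 1)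
      ≤ Real.exp (2 * ‖H₀‖ * |t| / (N : ℝ)) - 1 := by
    rw [habs2, habs3]
    have := aux_numeric (‖H₀‖ * |t|) (by positivity) N hN
    calc (Real.exp (‖H₀‖ * |t| / ((N : ℝ) + 1)) - 1)
          + (N : ℝ) * (Real.exp (‖H₀‖ * |t| / ((N : ℝ) * ((N : ℝ) + 1))) - 1)
        ≤ Real.exp (2 * (‖H₀‖ * |t|) / (N : ℝ)) - 1 := this
      _ = Real.exp (2 * ‖H₀‖ * |t| / (N : ℝ)) - 1 := by ring_nf
  have hwUV : ‖w * U - V‖ ≤ Real.exp (2 * ‖H₀‖ * |t| / (N : ℝ)) - 1 :=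
    le_trans htel (le_trans hsum hnum)
  -- conjugation and triangle inequality
  have hconj : w * (U * ρ * star U) * star w = (w * U) * ρ * star (w * U) := by
    rw [star_mul]
    simp only [mul_assoc]
  have h2 : ‖w * (U * ρ * star U) * star w - V * ρ * star V‖ ≤ 2 * ‖ρ‖ * ‖w * U - V‖ := by
    rw [hconj]
    exact aux_conj_diff hwUu hVu ρ
  have htri : ‖U * ρ * star U - V * ρ * star V‖
      ≤ ‖U * ρ * star U - w * (U * ρ * star U) * star w‖
        + ‖w * (U * ρ * star U) * star w - V * ρ * star V‖ := by
    have := norm_add_le (U * ρ * star U - w * (U * ρ * star U) * star w)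
      (w * (U * ρ * star U) * star w - V * ρ * star V)
    rw [sub_add_sub_cancel] at this
    exact this
  have hfinal : 2 * ‖ρ‖ * ‖w * U - V‖ ≤ 2 * ‖ρ‖ * (Real.exp (2 * ‖H₀‖ * |t| / (N : ℝ)) - 1) :=
    mul_le_mul_of_nonneg_left hwUV (by positivity)
  linarith [htri, h2, hfinal]
end

section
/- Let H₀ be a bounded self-adjoint operator on a Hilbert space and (u_n) unitary operators satisfying the cycle condition ∏_{n=0}^{L−1} u_{k+L−n} = 𝟙 for all k ≥ 0 and some L ≥ 1. With U_N(t) = ∏_{n=0}^{N−1} u_{N−n} e^{−iH₀t/N} and ρ_N(t) = U_N(t) ρ U_N(t)†, for any bounded ρ one has ‖ρ_N(t) − ρ_{N+L}(t)‖ ≤ ‖ρ‖(e^{2L‖H₀‖|t|/N} − 1) + L‖ρ‖(e^{2‖H₀‖|t|/N} − 1). In particular ρ_N(t) is Cauchy along arithmetic progressions of step L as N → ∞. -/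
open scoped Nat

namespace DecouplingCycleAux

variable {H : Type*} [NormedAddCommGroup H] [InnerProductSpace ℂ H] [CompleteSpace H]

noncomputable def expF (H₀ : H →L[ℂ] H) (s : ℝ) : H →L[ℂ] H :=
  NormedSpace.exp ((-(Complex.I) * (s : ℂ)) • H₀)

lemma star_coeff_smul (H₀ : H →L[ℂ] H) (hH₀ : IsSelfAdjoint H₀) (s : ℝ) :
    star ((-(Complex.I) * (s : ℂ)) • H₀) = -((-(Complex.I) * (s : ℂ)) • H₀) := by
  rw [star_smul, hH₀.star_eq, ← neg_smul]
  congr 1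
  simp [Complex.ext_iff]

lemma norm_coeff_smul (H₀ : H →L[ℂ] H) (s : ℝ) :
    ‖(-(Complex.I) * (s : ℂ)) • H₀‖ = ‖H₀‖ * |s| := by
  rw [norm_smul]
  simp [mul_comm]

lemma expF_mem_unitary (H₀ : H →L[ℂ] H) (hH₀ : IsSelfAdjoint H₀) (s : ℝ) :
    expF H₀ s ∈ unitary (H →L[ℂ] H) := by
  letI : NormedAlgebra ℚ (H →L[ℂ] H) := NormedAlgebra.restrictScalars ℚ ℂ _
  set A := (-(Complex.I) * (s : ℂ)) • H₀ with hA
  have hstar : star A = -A := star_coeff_smul H₀ hH₀ s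
  have h1 : NormedSpace.exp (-A) * NormedSpace.exp A = 1 := by
    rw [← NormedSpace.exp_add_of_commute ((Commute.refl A).neg_left), neg_add_cancel,
      NormedSpace.exp_zero]
  have h2 : NormedSpace.exp A * NormedSpace.exp (-A) = 1 := by
    rw [← NormedSpace.exp_add_of_commute ((Commute.refl A).neg_right), add_neg_cancel,
      NormedSpace.exp_zero]
  rw [expF, Unitary.mem_iff, NormedSpace.star_exp, ← hA, hstar]
  exact ⟨h1, h2⟩

lemma norm_unitary_le_one {x : H →L[ℂ] H} (hx : x ∈ unitary (H →L[ℂ] H)) : ‖x‖ ≤ 1 := by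
  calc ‖x‖ = ‖x * 1‖ := by rw [mul_one]
    _ = ‖(1 : H →L[ℂ] H)‖ := CStarRing.norm_mem_unitary_mul 1 hx
    _ ≤ 1 := by rw [ContinuousLinearMap.one_def]; exact ContinuousLinearMap.norm_id_le

lemma norm_exp_sub_one_le (A : H →L[ℂ] H) :
    ‖NormedSpace.exp A - 1‖ ≤ Real.exp ‖A‖ - 1 := by
  have hsum : Summable fun n : ℕ => ((n ! : ℂ))⁻¹ • A ^ n := by
    simpa using NormedSpace.expSeries_summable' (𝕂 := ℂ) A
  have hsumR : Summable fun n : ℕ => ‖A‖ ^ n / (n ! : ℝ) := Real.summable_pow_div_factorial ‖A‖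
  have hexpA : NormedSpace.exp A = ∑' n : ℕ, ((n ! : ℂ))⁻¹ • A ^ n := by
    rw [NormedSpace.exp_eq_tsum ℂ]
  have hexpR : Real.exp ‖A‖ = ∑' n : ℕ, ‖A‖ ^ n / (n ! : ℝ) := by
    rw [Real.exp_eq_exp_ℝ, NormedSpace.exp_eq_tsum_div]
  have hsplit : NormedSpace.exp A - 1 = ∑' n : ℕ, ((n + 1)! : ℂ)⁻¹ • A ^ (n + 1) := by
    rw [hexpA, hsum.tsum_eq_zero_add]
    simp
  have hsplitR : Real.exp ‖A‖ - 1 = ∑' n : ℕ, ‖A‖ ^ (n + 1) / ((n + 1)! : ℝ) := by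
    rw [hexpR, hsumR.tsum_eq_zero_add]
    simp
  rw [hsplit, hsplitR]
  have hsumR' : Summable fun n : ℕ => ‖A‖ ^ (n + 1) / ((n + 1)! : ℝ) :=
    hsumR.comp_injective (add_left_injective 1)
  refine tsum_of_norm_bounded hsumR'.hasSum fun n => ?_
  rw [norm_smul, norm_inv, Complex.norm_natCast, div_eq_inv_mul]
  exact mul_le_mul_of_nonneg_left (norm_pow_le' A n.succ_pos) (by positivity)

lemma norm_expF_sub_one_le (H₀ : H →L[ℂ] H) (s : ℝ) :
    ‖expF H₀ s - 1‖ ≤ Real.exp (‖H₀‖ * |s|) - 1 := by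
  have := norm_exp_sub_one_le ((-(Complex.I) * (s : ℂ)) • H₀)
  rwa [norm_coeff_smul] at this

lemma expF_add (H₀ : H →L[ℂ] H) (s r : ℝ) :
    expF H₀ (s + r) = expF H₀ s * expF H₀ r := by
  letI : NormedAlgebra ℚ (H →L[ℂ] H) := NormedAlgebra.restrictScalars ℚ ℂ _
  rw [expF, expF, expF, ← NormedSpace.exp_add_of_commute]
  · congr 1
    rw [← add_smul]
    congr 1
    push_cast
    ring
  · exact ((Commute.refl H₀).smul_left _).smul_right _

lemma norm_expF_sub_le (H₀ : H →L[ℂ] H) (hH₀ : IsSelfAdjoint H₀) (s r : ℝ) :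
    ‖expF H₀ s - expF H₀ r‖ ≤ Real.exp (‖H₀‖ * |s - r|) - 1 := by
  have hdecomp : expF H₀ s = expF H₀ r * expF H₀ (s - r) := by
    rw [← expF_add]
    congr 1
    ring
  calc ‖expF H₀ s - expF H₀ r‖ = ‖expF H₀ r * (expF H₀ (s - r) - 1)‖ := by
        rw [mul_sub, mul_one, ← hdecomp]
    _ = ‖expF H₀ (s - r) - 1‖ :=
        CStarRing.norm_mem_unitary_mul _ (expF_mem_unitary H₀ hH₀ r)
    _ ≤ Real.exp (‖H₀‖ * |s - r|) - 1 := norm_expF_sub_one_le H₀ _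

lemma norm_list_prod_le_one {l : List (H →L[ℂ] H)} (h : ∀ x ∈ l, ‖x‖ ≤ 1) :
    ‖l.prod‖ ≤ 1 := by
  induction l with
  | nil =>
      simp only [List.prod_nil, ContinuousLinearMap.one_def]
      exact ContinuousLinearMap.norm_id_le
  | cons a l ih =>
      rw [List.prod_cons]
      calc ‖a * l.prod‖ ≤ ‖a‖ * ‖l.prod‖ := norm_mul_le _ _
        _ ≤ 1 * 1 :=
            mul_le_mul (h a (List.mem_cons_self))
              (ih fun x hx => h x (List.mem_cons_of_mem a hx)) (norm_nonneg _) zero_le_one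
        _ = 1 := one_mul 1

lemma prod_sub_prod_le (l : List ℕ) (f g : ℕ → (H →L[ℂ] H)) (ε : ℝ) (hε : 0 ≤ ε)
    (hf : ∀ i, ‖f i‖ ≤ 1) (hg : ∀ i, ‖g i‖ ≤ 1) (h : ∀ i ∈ l, ‖f i - g i‖ ≤ ε) :
    ‖(l.map f).prod - (l.map g).prod‖ ≤ l.length * ε := by
  induction l with
  | nil => simp
  | cons a l ih =>
      have hP : ‖(l.map f).prod‖ ≤ 1 := by
        refine norm_list_prod_le_one fun x hx => ?_
        obtain ⟨i, _, rfl⟩ := List.mem_map.mp hx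
        exact hf i
      have key : f a * (l.map f).prod - g a * (l.map g).prod
          = (f a - g a) * (l.map f).prod + g a * ((l.map f).prod - (l.map g).prod) := by
        rw [sub_mul, mul_sub]; abel
      rw [List.map_cons, List.map_cons, List.prod_cons, List.prod_cons, key]
      calc ‖(f a - g a) * (l.map f).prod + g a * ((l.map f).prod - (l.map g).prod)‖
          ≤ ‖(f a - g a) * (l.map f).prod‖ + ‖g a * ((l.map f).prod - (l.map g).prod)‖ :=
            norm_add_le _ _
        _ ≤ ‖f a - g a‖ * ‖(l.map f).prod‖ + ‖g a‖ * ‖(l.map f).prod - (l.map g).prod‖ :=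
            add_le_add (norm_mul_le _ _) (norm_mul_le _ _)
        _ ≤ ε * 1 + 1 * (l.length * ε) := by
            refine add_le_add (mul_le_mul (h a (List.mem_cons_self)) hP (norm_nonneg _) hε) ?_
            exact mul_le_mul (hg a) (ih fun i hi => h i (List.mem_cons_of_mem a hi))
              (norm_nonneg _) zero_le_one
        _ = (l.length + 1) * ε := by ring
        _ = ((a :: l).length : ℝ) * ε := by simp [List.length_cons]

lemma two_exp_sub_one (x : ℝ) (hx : 0 ≤ x) :
    2 * (Real.exp x - 1) ≤ Real.exp (2 * x) - 1 := by
  rw [two_mul x, Real.exp_add]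
  nlinarith [sq_nonneg (Real.exp x - 1), Real.one_le_exp hx]

lemma nat_mul_exp_sub_one (n : ℕ) (x : ℝ) :
    (n : ℝ) * (Real.exp x - 1) ≤ Real.exp (n * x) - 1 := by
  rw [Real.exp_nat_mul]
  have h := one_add_mul_le_pow (a := Real.exp x - 1) (by nlinarith [Real.exp_pos x]) n
  have h2 : (1 : ℝ) + (Real.exp x - 1) = Real.exp x := by ring
  rw [h2] at h
  linarith

end DecouplingCycleAux

set_option maxHeartbeats 1000000 in
open DecouplingCycleAux in
/-- Cycle comparison inequality for decoupling sequences whose pulses multiply to the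
identity over each cycle of length `L` (Corollary of Appendix B). -/
theorem decoupling_cycle_inequality
    {H : Type*} [NormedAddCommGroup H] [InnerProductSpace ℂ H] [CompleteSpace H]
    (u : ℕ → H →L[ℂ] H) (hu : ∀ n, u n ∈ unitary (H →L[ℂ] H))
    (L : ℕ) (hL : 1 ≤ L)
    (hcycle : ∀ k : ℕ, ((List.range L).map (fun n => u (k + L - n))).prod = 1)
    (H₀ : H →L[ℂ] H) (hH₀ : IsSelfAdjoint H₀)
    (ρ : H →L[ℂ] H) (t : ℝ) (N : ℕ) (hN : 1 ≤ N) :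
    ‖pulseEvolution u H₀ N t * ρ * star (pulseEvolution u H₀ N t)
      - pulseEvolution u H₀ (N + L) t * ρ * star (pulseEvolution u H₀ (N + L) t)‖
    ≤ ‖ρ‖ * (Real.exp (2 * L * ‖H₀‖ * |t| / N) - 1)
      + L * ‖ρ‖ * (Real.exp (2 * ‖H₀‖ * |t| / N) - 1) := by
  have hN1 : (1 : ℝ) ≤ (N : ℝ) := by exact_mod_cast hN
  have hL1 : (1 : ℝ) ≤ (L : ℝ) := by exact_mod_cast hL
  have hNpos : (0 : ℝ) < N := lt_of_lt_of_le one_pos hN1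
  have hLpos : (0 : ℝ) < L := lt_of_lt_of_le one_pos hL1
  have hN0 : (N : ℝ) ≠ 0 := ne_of_gt hNpos
  set a : ℝ := t / (N : ℝ) with ha
  set b : ℝ := t / ((N + L : ℕ) : ℝ) with hb
  set UN : H →L[ℂ] H := pulseEvolution u H₀ N t with hUN
  set UNL : H →L[ℂ] H := pulseEvolution u H₀ (N + L) t with hUNL
  set P : H →L[ℂ] H := ((List.range L).map (fun n => u (L + N - n) * expF H₀ b)).prod with hP
  set Q : H →L[ℂ] H := ((List.range N).map (fun n => u (N - n) * expF H₀ b)).prod with hQ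
  -- unitarity facts
  have hprod_mem : ∀ (l : List ℕ) (v : ℕ → ℕ) (s : ℝ),
      ((l.map (fun n => u (v n) * expF H₀ s)).prod) ∈ unitary (H →L[ℂ] H) := by
    intro l v s
    refine Submonoid.list_prod_mem _ ?_
    intro x hx
    obtain ⟨i, _, rfl⟩ := List.mem_map.mp hx
    exact mul_mem (hu _) (expF_mem_unitary H₀ hH₀ _)
  have hUN_mem : UN ∈ unitary (H →L[ℂ] H) := hprod_mem _ _ _
  have hUNL_mem : UNL ∈ unitary (H →L[ℂ] H) := hprod_mem _ _ _
  have hQ_mem : Q ∈ unitary (H →L[ℂ] H) := hprod_mem _ _ _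
  -- decomposition
  have hsplit : UNL = P * Q := by
    rw [hUNL]
    show ((List.range (N + L)).map (fun n => u (N + L - n) * expF H₀ b)).prod = P * Q
    rw [show N + L = L + N from Nat.add_comm N L, List.range_add, List.map_append,
      List.prod_append, List.map_map, hP, hQ]
    congr 1
    refine congrArg List.prod (List.map_congr_left fun n _ => ?_)
    have hidx : L + N - (L + n) = N - n := by omega
    simp [Function.comp, hidx]
  -- bound on ‖P - 1‖
  have hb_abs : (0 : ℝ) ≤ ‖H₀‖ * |b| := by positivity
  have hP1 : ‖P - 1‖ ≤ (L : ℝ) * (Real.exp (‖H₀‖ * |b|) - 1) := by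
    have hg1 : ((List.range L).map (fun n => u (L + N - n))).prod = 1 := by
      have h := hcycle N
      rw [show N + L = L + N from Nat.add_comm N L] at h
      exact h
    have h := prod_sub_prod_le (List.range L) (fun n => u (L + N - n) * expF H₀ b)
      (fun n => u (L + N - n)) (Real.exp (‖H₀‖ * |b|) - 1)
      (by nlinarith [Real.one_le_exp hb_abs])
      (fun i => norm_unitary_le_one (mul_mem (hu _) (expF_mem_unitary H₀ hH₀ _)))
      (fun i => norm_unitary_le_one (hu _))
      (fun i _ => by
        rw [show u (L + N - i) * expF H₀ b - u (L + N - i)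
            = u (L + N - i) * (expF H₀ b - 1) by rw [mul_sub, mul_one]]
        rw [CStarRing.norm_mem_unitary_mul _ (hu _)]
        exact norm_expF_sub_one_le H₀ b)
    rwa [hg1, List.length_range, ← hP] at h
  -- bound on ‖Q - UN‖
  have hba_abs : (0 : ℝ) ≤ ‖H₀‖ * |b - a| := by positivity
  have hQUN : ‖Q - UN‖ ≤ (N : ℝ) * (Real.exp (‖H₀‖ * |b - a|) - 1) := by
    have h := prod_sub_prod_le (List.range N) (fun n => u (N - n) * expF H₀ b)
      (fun n => u (N - n) * expF H₀ a) (Real.exp (‖H₀‖ * |b - a|) - 1)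
      (by nlinarith [Real.one_le_exp hba_abs])
      (fun i => norm_unitary_le_one (mul_mem (hu _) (expF_mem_unitary H₀ hH₀ _)))
      (fun i => norm_unitary_le_one (mul_mem (hu _) (expF_mem_unitary H₀ hH₀ _)))
      (fun i _ => by
        rw [show u (N - i) * expF H₀ b - u (N - i) * expF H₀ a
            = u (N - i) * (expF H₀ b - expF H₀ a) by rw [mul_sub]]
        rw [CStarRing.norm_mem_unitary_mul _ (hu _)]
        exact norm_expF_sub_le H₀ hH₀ b a)
    rw [List.length_range, ← hQ] at h
    have hUNeq : ((List.range N).map (fun n => u (N - n) * expF H₀ a)).prod = UN := by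
      rw [hUN]; rfl
    rwa [hUNeq] at h
  -- distance between unitaries
  have hD : ‖UN - UNL‖ ≤ (L : ℝ) * (Real.exp (‖H₀‖ * |b|) - 1)
      + (N : ℝ) * (Real.exp (‖H₀‖ * |b - a|) - 1) := by
    rw [norm_sub_rev, hsplit]
    have hdecomp : P * Q - UN = (P - 1) * Q + (Q - UN) := by
      rw [sub_mul, one_mul]; abel
    rw [hdecomp]
    calc ‖(P - 1) * Q + (Q - UN)‖ ≤ ‖(P - 1) * Q‖ + ‖Q - UN‖ := norm_add_le _ _
      _ = ‖P - 1‖ + ‖Q - UN‖ := by rw [CStarRing.norm_mul_mem_unitary _ hQ_mem]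
      _ ≤ _ := add_le_add hP1 hQUN
  -- main difference bound
  have hkey : UN * ρ * star UN - UNL * ρ * star UNL
      = (UN - UNL) * ρ * star UN + UNL * ρ * (star UN - star UNL) := by
    simp only [sub_mul, mul_sub]
    abel
  have hmain : ‖UN * ρ * star UN - UNL * ρ * star UNL‖ ≤ 2 * ‖ρ‖ * ‖UN - UNL‖ := by
    rw [hkey]
    calc ‖(UN - UNL) * ρ * star UN + UNL * ρ * (star UN - star UNL)‖
        ≤ ‖(UN - UNL) * ρ * star UN‖ + ‖UNL * ρ * (star UN - star UNL)‖ := norm_add_le _ _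
      _ ≤ ‖UN - UNL‖ * ‖ρ‖ + ‖ρ‖ * ‖UN - UNL‖ := by
          refine add_le_add ?_ ?_
          · rw [CStarRing.norm_mul_mem_unitary _ (Unitary.star_mem hUN_mem)]
            exact norm_mul_le _ _
          · rw [show star UN - star UNL = star (UN - UNL) by rw [star_sub]]
            calc ‖UNL * ρ * star (UN - UNL)‖ ≤ ‖UNL * ρ‖ * ‖star (UN - UNL)‖ :=
                  norm_mul_le _ _
              _ = ‖ρ‖ * ‖UN - UNL‖ := by
                  rw [CStarRing.norm_mem_unitary_mul _ hUNL_mem, norm_star]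
      _ = 2 * ‖ρ‖ * ‖UN - UNL‖ := by ring
  -- numeric estimates
  have hHnn : (0 : ℝ) ≤ ‖H₀‖ := norm_nonneg _
  have htnn : (0 : ℝ) ≤ |t| := abs_nonneg _
  have hcast : ((N + L : ℕ) : ℝ) = (N : ℝ) + L := by push_cast; ring
  have hNLpos : (0 : ℝ) < (N : ℝ) + L := by linarith
  have hbval : |b| = |t| / ((N : ℝ) + L) := by
    rw [hb, hcast, abs_div, abs_of_pos hNLpos]
  have hbaval : |b - a| = |t| * L / ((N : ℝ) * ((N : ℝ) + L)) := by
    have h1 : b - a = -(t * L / ((N : ℝ) * ((N : ℝ) + L))) := by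
      rw [hb, ha, hcast]
      field_simp
      ring
    rw [h1, abs_neg, abs_div, abs_mul, abs_of_pos (show (0 : ℝ) < (N : ℝ) * ((N : ℝ) + L)
      from by positivity), abs_of_pos hLpos]
  have hY : 2 * (‖H₀‖ * |b|) ≤ 2 * ‖H₀‖ * |t| / N := by
    rw [hbval, show 2 * (‖H₀‖ * (|t| / ((N : ℝ) + L))) = 2 * ‖H₀‖ * |t| / ((N : ℝ) + L)
      from by ring]
    exact div_le_div_of_nonneg_left (by positivity) hNpos (by linarith)
  have hE1 : 2 * (Real.exp (‖H₀‖ * |b|) - 1) ≤ Real.exp (2 * ‖H₀‖ * |t| / N) - 1 := by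
    have h2 := two_exp_sub_one (‖H₀‖ * |b|) hb_abs
    have h3 := Real.exp_le_exp.mpr hY
    linarith
  have hX : 2 * ((N : ℝ) * (‖H₀‖ * |b - a|)) ≤ 2 * L * ‖H₀‖ * |t| / N := by
    rw [hbaval, show 2 * ((N : ℝ) * (‖H₀‖ * (|t| * L / ((N : ℝ) * ((N : ℝ) + L)))))
        = 2 * L * ‖H₀‖ * |t| / ((N : ℝ) + L) from by field_simp]
    exact div_le_div_of_nonneg_left (by positivity) hNpos (by linarith)
  have hE2 : 2 * ((N : ℝ) * (Real.exp (‖H₀‖ * |b - a|) - 1))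
      ≤ Real.exp (2 * L * ‖H₀‖ * |t| / N) - 1 := by
    have h1 : (N : ℝ) * (Real.exp (‖H₀‖ * |b - a|) - 1)
        ≤ Real.exp ((N : ℝ) * (‖H₀‖ * |b - a|)) - 1 := nat_mul_exp_sub_one N _
    have h2 : 2 * (Real.exp ((N : ℝ) * (‖H₀‖ * |b - a|)) - 1)
        ≤ Real.exp (2 * ((N : ℝ) * (‖H₀‖ * |b - a|))) - 1 :=
      two_exp_sub_one _ (by positivity)
    have h3 := Real.exp_le_exp.mpr hX
    linarith
  -- conclude
  have hρnn : (0 : ℝ) ≤ ‖ρ‖ := norm_nonneg _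
  calc ‖UN * ρ * star UN - UNL * ρ * star UNL‖ ≤ 2 * ‖ρ‖ * ‖UN - UNL‖ := hmain
    _ ≤ 2 * ‖ρ‖ * ((L : ℝ) * (Real.exp (‖H₀‖ * |b|) - 1)
        + (N : ℝ) * (Real.exp (‖H₀‖ * |b - a|) - 1)) :=
        mul_le_mul_of_nonneg_left hD (by positivity)
    _ ≤ ‖ρ‖ * (Real.exp (2 * L * ‖H₀‖ * |t| / N) - 1)
        + L * ‖ρ‖ * (Real.exp (2 * ‖H₀‖ * |t| / N) - 1) := by
        have e1 : (L : ℝ) * (2 * (Real.exp (‖H₀‖ * |b|) - 1))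
            ≤ (L : ℝ) * (Real.exp (2 * ‖H₀‖ * |t| / N) - 1) :=
          mul_le_mul_of_nonneg_left hE1 (by positivity)
        nlinarith [mul_le_mul_of_nonneg_left hE2 hρnn, mul_le_mul_of_nonneg_left e1 hρnn]
end
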